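/- Let (M, ⊣) be a monoid with identity e and M^{~1} = M ∪ {1̃} with the operation extended by 1̃ ⊣ 1̃ = e, 1̃ ⊣ m = m ⊣ 1̃ = m. If (M^{~1}, ⊢) is an interassociate of (M^{~1}, ⊣) with a := 1̃ ⊢ 1̃ ∈ M, then x ⊢ y = x ⊣ a ⊣ y for all x, y ∈ M^{~1}, i.e., (M^{~1}, ⊢) is the variant of (M^{~1}, ⊣) with sandwich element a. -/
import Mathlib


/-- Let `(M, ⊣)` be a monoid and `M^{~1} = M ∪ {1̃}` (modelled as `Option M` with
`none = 1̃`). If `⊢` is an interassociate of the extended operation `⊣` with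
`1̃ ⊢ 1̃ = a ∈ M`, then `⊢` is the variant of `⊣` with sandwich element `a`. -/
theorem interassociate_of_almost_monoid_is_variant {M : Type*} [Monoid M]
    (h : Option M → Option M → Option M)
    (h_assoc : ∀ x y z, h (h x y) z = h x (h y z))
    (inter1 : ∀ x y z : Option M,
      h ((fun p q => match p, q with
            | some a, some b => some (a * b)
            | some a, none => some a
            | none, some b => some b
            | none, none => some 1) x y) z
        = (fun p q => match p, q with
            | some a, some b => some (a * b)
            | some a, none => some a
            | none, some b => some b
            | none, none => some 1) x (h y z))
    (inter2 : ∀ x y z : Option M,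
      (fun p q => match p, q with
          | some a, some b => some (a * b)
          | some a, none => some a
          | none, some b => some b
          | none, none => some 1) (h x y) z
        = h x ((fun p q => match p, q with
            | some a, some b => some (a * b)
            | some a, none => some a
            | none, some b => some b
            | none, none => some 1) y z))
    (a : M) (ha : h none none = some a) :
    ∀ x y : Option M,
      h x y = (fun p q => match p, q with
          | some u, some v => some (u * v)
          | some u, none => some u
          | none, some v => some v
          | none, none => some 1)
        ((fun p q => match p, q with
          | some u, some v => some (u * v)
          | some u, none => some u
          | none, some v => some v
          | none, none => some 1) x (some a)) y := by
  intro x y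
  have hA : ∀ v : M, h none (some v) = some (a * v) := by
    intro v
    have t := inter2 none none (some v)
    rw [ha] at t
    exact t.symm
  match x, y with
  | none, none => simpa using ha
  | none, some v => simpa using hA v
  | some u, none =>
      have t := inter1 (some u) none none
      rw [ha] at t
      simpa using t
  | some u, some v =>
      have t := inter1 (some u) none (some v)
      rw [hA v] at t
      simpa [mul_assoc] using t
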